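/- arXiv:0801.1744 — 3 statements merged into one kernel-verified Lean document; each statement's English description precedes it below -/
import Mathlib

section
/- Let G be a simple graph, let xy be an edge of G, let G' = G − xy, and let c be an acyclic proper edge coloring of G'. Let F_x and F_y be the sets of colors appearing on edges of G' incident to x and to y respectively, and let β be a color with β ∉ F_x ∪ F_y. Then extending c to G by assigning color β to the edge xy fails to be an acyclic proper edge coloring of G if and only if there exists a color α ∈ F_x ∩ F_y such that G' contains an (α,β,xy)-critical path, i.e., a maximal path whose edges are colored alternately α and β, with endpoints x and y, whose edge incident to x and whose edge incident to y are both colored α. -/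
/-- A proper edge coloring: distinct edges of `G` sharing a vertex get distinct colors. -/
def ProperEdgeColoring {V : Type*} (G : SimpleGraph V) (c : Sym2 V → ℕ) : Prop :=
  ∀ e₁ ∈ G.edgeSet, ∀ e₂ ∈ G.edgeSet, e₁ ≠ e₂ → (∃ v : V, v ∈ e₁ ∧ v ∈ e₂) → c e₁ ≠ c e₂

/-- An acyclic proper edge coloring: proper, and no cycle of `G` uses only two colors. -/
def AcyclicProperEdgeColoring {V : Type*} (G : SimpleGraph V) (c : Sym2 V → ℕ) : Prop :=
  ProperEdgeColoring G c ∧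
    ∀ (v : V) (p : G.Walk v v), p.IsCycle →
      ¬ ∃ α β : ℕ, ∀ e ∈ p.edges, c e = α ∨ c e = β

/-- The set of colors appearing on edges of `G` incident to `u`. -/
def incidentColors {V : Type*} (G : SimpleGraph V) (c : Sym2 V → ℕ) (u : V) : Set ℕ :=
  {γ : ℕ | ∃ v : V, G.Adj u v ∧ c s(u, v) = γ}

/-- An (α,β)-bichromatic path: a path all of whose edges are colored α or β. -/
def IsBichromaticPath {V : Type*} (G : SimpleGraph V) (c : Sym2 V → ℕ) (α β : ℕ)
    {a b : V} (p : G.Walk a b) : Prop :=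
  p.IsPath ∧ ∀ e ∈ p.edges, c e = α ∨ c e = β

/-- A maximal (α,β)-bichromatic path: it cannot be extended at either endpoint. -/
def IsMaximalBichromaticPath {V : Type*} (G : SimpleGraph V) (c : Sym2 V → ℕ) (α β : ℕ)
    {a b : V} (p : G.Walk a b) : Prop :=
  IsBichromaticPath G c α β p ∧
    (∀ w : V, G.Adj a w → (c s(a, w) = α ∨ c s(a, w) = β) → s(a, w) ∈ p.edges) ∧
    (∀ w : V, G.Adj b w → (c s(b, w) = α ∨ c s(b, w) = β) → s(b, w) ∈ p.edges)

/-- An (α,β,ab)-critical path: a maximal (α,β)-bichromatic path from `a` to `b`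
whose edges incident to the endpoints are colored α. -/
def IsCriticalPath {V : Type*} (G : SimpleGraph V) (c : Sym2 V → ℕ) (α β : ℕ)
    {a b : V} (p : G.Walk a b) : Prop :=
  IsMaximalBichromaticPath G c α β p ∧
    (∀ e ∈ p.edges, a ∈ e → c e = α) ∧ (∀ e ∈ p.edges, b ∈ e → c e = α)

section Helpers
variable {V : Type*}

lemma mem_incidentColors_of_mem {G : SimpleGraph V} {c : Sym2 V → ℕ} {x : V} {e : Sym2 V}
    (he : e ∈ G.edgeSet) (hx : x ∈ e) : c e ∈ incidentColors G c x := by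
  obtain ⟨w, rfl⟩ := Sym2.mem_iff_exists.mp hx
  exact ⟨w, G.mem_edgeSet.mp he, rfl⟩

lemma exists_edge_at_start {G : SimpleGraph V} {x y : V} (hne : x ≠ y) (q : G.Walk x y) :
    ∃ e ∈ q.edges, x ∈ e := by
  cases q with
  | nil => exact absurd rfl hne
  | cons h q' => exact ⟨_, List.mem_cons_self, Sym2.mem_mk_left _ _⟩

lemma first_edge_of_path {G : SimpleGraph V} {x y w : V} (hne : x ≠ y) {s : G.Walk x w}
    (hs : s.IsPath) (he : s(x, y) ∈ s.edges) :
    ∃ (h2 : G.Adj x y) (q' : G.Walk y w), s = SimpleGraph.Walk.cons h2 q' := by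
  cases s with
  | nil => simp at he
  | @cons _ z _ h2 s' =>
    rw [SimpleGraph.Walk.edges_cons, List.mem_cons] at he
    rw [SimpleGraph.Walk.cons_isPath_iff] at hs
    rcases he with he | he
    · have hz : z = y := by
        rcases Sym2.eq_iff.mp he with ⟨-, h1⟩ | ⟨h1, h2⟩
        · exact h1.symm
        · exact absurd h2.symm hne
      subst hz
      exact ⟨h2, s', rfl⟩
    · exact absurd (s'.fst_mem_support_of_mem_edges he) hs.2

lemma exists_path_of_cycle {G : SimpleGraph V} {x y : V} (hne : x ≠ y)
    {r : G.Walk x x} (hr : r.IsCycle) (he : s(x, y) ∈ r.edges) :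
    ∃ q : G.Walk x y, q.IsPath ∧ s(x, y) ∉ q.edges ∧ ∀ e ∈ q.edges, e ∈ r.edges := by
  cases r with
  | nil => simp at he
  | @cons _ w _ h r' =>
    rw [SimpleGraph.Walk.cons_isCycle_iff] at hr
    obtain ⟨hp', hfe⟩ := hr
    rw [SimpleGraph.Walk.edges_cons, List.mem_cons] at he
    rcases he with he | he
    · have hw : w = y := by
        rcases Sym2.eq_iff.mp he with ⟨-, h1⟩ | ⟨h1, h2⟩
        · exact h1.symm
        · exact absurd h2.symm hne
      subst hw
      refine ⟨r'.reverse, hp'.reverse, ?_, ?_⟩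
      · rw [SimpleGraph.Walk.edges_reverse, List.mem_reverse]
        exact he ▸ hfe
      · intro e h'
        rw [SimpleGraph.Walk.edges_reverse, List.mem_reverse] at h'
        exact List.mem_cons_of_mem _ h'
    · have hne2 : s(x, y) ≠ s(x, w) := fun hh => hfe (hh ▸ he)
      have he' : s(x, y) ∈ r'.reverse.edges := by
        rw [SimpleGraph.Walk.edges_reverse, List.mem_reverse]; exact he
      obtain ⟨h2, q', hs_eq⟩ := first_edge_of_path hne hp'.reverse he'
      have hq'path : q'.IsPath ∧ x ∉ q'.support := by
        have := hp'.reverse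
        rw [hs_eq, SimpleGraph.Walk.cons_isPath_iff] at this
        exact this
      have hq'sub : ∀ e ∈ q'.edges, e ∈ r'.edges := by
        intro e heq
        have : e ∈ r'.reverse.edges := by
          rw [hs_eq, SimpleGraph.Walk.edges_cons]; exact List.mem_cons_of_mem _ heq
        rwa [SimpleGraph.Walk.edges_reverse, List.mem_reverse] at this
      have hq'not : s(x, y) ∉ q'.edges := by
        have hnodup : r'.reverse.edges.Nodup := hp'.reverse.isTrail.edges_nodup
        rw [hs_eq, SimpleGraph.Walk.edges_cons, List.nodup_cons] at hnodup
        exact hnodup.1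
      refine ⟨SimpleGraph.Walk.cons h q'.reverse, ?_, ?_, ?_⟩
      · rw [SimpleGraph.Walk.cons_isPath_iff]
        refine ⟨hq'path.1.reverse, ?_⟩
        rw [SimpleGraph.Walk.support_reverse, List.mem_reverse]
        exact hq'path.2
      · rw [SimpleGraph.Walk.edges_cons, List.mem_cons]
        rintro (hh | hh)
        · exact hne2 hh
        · rw [SimpleGraph.Walk.edges_reverse, List.mem_reverse] at hh
          exact hq'not hh
      · intro e heq
        rw [SimpleGraph.Walk.edges_cons, List.mem_cons] at heq ⊢
        rcases heq with hh | hh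
        · exact Or.inl hh
        · rw [SimpleGraph.Walk.edges_reverse, List.mem_reverse] at hh
          exact Or.inr (hq'sub e hh)

end Helpers


/-- **Fact 2.** Let `xy` be an edge of `G`, `G' = G - xy`, and `c` an acyclic proper
edge coloring of `G'`.  A candidate color `β ∉ F_x ∪ F_y` fails to extend `c` to an
acyclic proper edge coloring of `G` if and only if there is a color `α ∈ F_x ∩ F_y`
such that `G'` contains an `(α,β,xy)`-critical path. -/
theorem candidate_not_valid_iff_critical_path {V : Type*} [DecidableEq V]
    (G : SimpleGraph V) (x y : V) (hxy : G.Adj x y) (c : Sym2 V → ℕ)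
    (hc : AcyclicProperEdgeColoring (G.deleteEdges {s(x, y)}) c)
    (β : ℕ)
    (hβ : β ∉ incidentColors (G.deleteEdges {s(x, y)}) c x ∪
            incidentColors (G.deleteEdges {s(x, y)}) c y) :
    ¬ AcyclicProperEdgeColoring G (fun e => if e = s(x, y) then β else c e) ↔
      ∃ α : ℕ, α ∈ incidentColors (G.deleteEdges {s(x, y)}) c x ∧
        α ∈ incidentColors (G.deleteEdges {s(x, y)}) c y ∧
        ∃ p : (G.deleteEdges {s(x, y)}).Walk x y,
          IsCriticalPath (G.deleteEdges {s(x, y)}) c α β p := by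
  set G' : SimpleGraph V := G.deleteEdges {s(x, y)} with hG'def
  set c' : Sym2 V → ℕ := fun e => if e = s(x, y) then β else c e with hc'def
  have hne : x ≠ y := hxy.ne
  have hβx : β ∉ incidentColors G' c x := fun h => hβ (Or.inl h)
  have hβy : β ∉ incidentColors G' c y := fun h => hβ (Or.inr h)
  have hG'edge : ∀ e, e ∈ G'.edgeSet ↔ e ∈ G.edgeSet ∧ e ≠ s(x, y) := by
    intro e
    rw [hG'def, SimpleGraph.edgeSet_deleteEdges]
    simp [Set.mem_diff]
  have hc'eq : ∀ e ∈ G'.edgeSet, c' e = c e := by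
    intro e he
    rw [hc'def]
    simp only [if_neg ((hG'edge e).mp he).2]
  have hc'xy : c' s(x, y) = β := by simp [hc'def]
  -- c' is a proper edge coloring of G
  have hproper : ProperEdgeColoring G c' := by
    intro e₁ h₁ e₂ h₂ hne12 hshare
    obtain ⟨v, hv1, hv2⟩ := hshare
    by_cases H1 : e₁ = s(x, y) <;> by_cases H2 : e₂ = s(x, y)
    · exact absurd (H1.trans H2.symm) hne12
    · have he2' : e₂ ∈ G'.edgeSet := (hG'edge e₂).mpr ⟨h₂, H2⟩
      have hv1' : v = x ∨ v = y := by
        rw [H1] at hv1; exact Sym2.mem_iff.mp hv1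
      have : c e₂ ≠ β := by
        rcases hv1' with rfl | rfl
        · exact fun hh => hβx (hh ▸ mem_incidentColors_of_mem he2' hv2)
        · exact fun hh => hβy (hh ▸ mem_incidentColors_of_mem he2' hv2)
      rw [H1, hc'xy, hc'eq e₂ he2']
      exact fun hh => this hh.symm
    · have he1' : e₁ ∈ G'.edgeSet := (hG'edge e₁).mpr ⟨h₁, H1⟩
      have hv2' : v = x ∨ v = y := by
        rw [H2] at hv2; exact Sym2.mem_iff.mp hv2
      have : c e₁ ≠ β := by
        rcases hv2' with rfl | rfl
        · exact fun hh => hβx (hh ▸ mem_incidentColors_of_mem he1' hv1)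
        · exact fun hh => hβy (hh ▸ mem_incidentColors_of_mem he1' hv1)
      rw [H2, hc'xy, hc'eq e₁ he1']
      exact this
    · have he1' : e₁ ∈ G'.edgeSet := (hG'edge e₁).mpr ⟨h₁, H1⟩
      have he2' : e₂ ∈ G'.edgeSet := (hG'edge e₂).mpr ⟨h₂, H2⟩
      rw [hc'eq e₁ he1', hc'eq e₂ he2']
      exact hc.1 e₁ he1' e₂ he2' hne12 ⟨v, hv1, hv2⟩
  constructor
  · -- Forward direction
    intro hnot
    rw [AcyclicProperEdgeColoring, not_and] at hnot
    have hB := hnot hproper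
    push_neg at hB
    obtain ⟨v, p, hcycle, hex⟩ := hB
    obtain ⟨α', β', hcolors⟩ := hex
    -- the cycle must use the edge s(x,y)
    have hmem : s(x, y) ∈ p.edges := by
      by_contra hnotmem
      have hsubG' : ∀ e ∈ p.edges, e ∈ G'.edgeSet := fun e he =>
        (hG'edge e).mpr ⟨p.edges_subset_edgeSet he, fun hh => hnotmem (hh ▸ he)⟩
      refine hc.2 v (p.transfer G' hsubG') (hcycle.transfer hsubG') ⟨α', β', ?_⟩
      intro e he
      rw [SimpleGraph.Walk.edges_transfer] at he
      rw [← hc'eq e (hsubG' e he)]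
      exact hcolors e he
    have hx : x ∈ p.support := p.fst_mem_support_of_mem_edges hmem
    set r := p.rotate x hx with hrdef
    have hr : r.IsCycle := hcycle.rotate hx
    have hrot := p.rotate_edges x hx
    have hmem' : s(x, y) ∈ r.edges := hrot.mem_iff.mpr hmem
    have hcolors' : ∀ e ∈ r.edges, c' e = α' ∨ c' e = β' := fun e he =>
      hcolors e (hrot.mem_iff.mp he)
    obtain ⟨q, hqpath, hqnot, hqsub⟩ := exists_path_of_cycle hne hr hmem'
    have hqG' : ∀ e ∈ q.edges, e ∈ G'.edgeSet := fun e he =>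
      (hG'edge e).mpr ⟨r.edges_subset_edgeSet (hqsub e he), fun hh => hqnot (hh ▸ he)⟩
    have hqcol : ∀ e ∈ q.edges, c e = α' ∨ c e = β' := fun e he => by
      rw [← hc'eq e (hqG' e he)]; exact hcolors' e (hqsub e he)
    have hβmem : β = α' ∨ β = β' := by
      rw [← hc'xy]; exact hcolors' _ hmem'
    -- pick the edge of q at x
    obtain ⟨e₀, he₀q, hxe₀⟩ := exists_edge_at_start hne q
    obtain ⟨e₁, he₁q, hye₁⟩ := by
      have := exists_edge_at_start hne.symm q.reverse
      simp only [SimpleGraph.Walk.edges_reverse, List.mem_reverse] at this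
      exact this
    set α := c e₀ with hαdef
    have hαx : α ∈ incidentColors G' c x := mem_incidentColors_of_mem (hqG' e₀ he₀q) hxe₀
    have hαβ : α ≠ β := fun hh => hβx (hh ▸ hαx)
    have hαmem : α = α' ∨ α = β' := hqcol e₀ he₀q
    have hq2 : ∀ e ∈ q.edges, c e = α ∨ c e = β := by
      intro e he
      rcases hqcol e he with h | h <;> rcases hβmem with hb | hb <;>
        rcases hαmem with ha | ha <;> omega
    -- colors in F sets forced to α
    have hforce_x : ∀ e ∈ q.edges, x ∈ e → c e = α := by
      intro e he hxe
      rcases hq2 e he with h | h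
      · exact h
      · exact absurd (h ▸ mem_incidentColors_of_mem (hqG' e he) hxe) hβx
    have hforce_y : ∀ e ∈ q.edges, y ∈ e → c e = α := by
      intro e he hye
      rcases hq2 e he with h | h
      · exact h
      · exact absurd (h ▸ mem_incidentColors_of_mem (hqG' e he) hye) hβy
    have hαy : α ∈ incidentColors G' c y := by
      have := hforce_y e₁ he₁q hye₁
      exact this ▸ mem_incidentColors_of_mem (hqG' e₁ he₁q) hye₁
    -- transfer q to G'
    refine ⟨α, hαx, hαy, q.transfer G' hqG', ?_⟩
    have hedges : (q.transfer G' hqG').edges = q.edges := q.edges_transfer hqG'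
    refine ⟨⟨⟨hqpath.transfer hqG', ?_⟩, ?_, ?_⟩, ?_, ?_⟩
    · rw [hedges]; exact hq2
    · -- maximality at x
      intro w hadj hcw
      have hewG' : s(x, w) ∈ G'.edgeSet := G'.mem_edgeSet.mpr hadj
      have hcw' : c s(x, w) = α := by
        rcases hcw with h | h
        · exact h
        · exact absurd (h ▸ mem_incidentColors_of_mem hewG' (Sym2.mem_mk_left _ _)) hβx
      have hce₀ : c e₀ = α := rfl
      rw [hedges]
      by_contra hnotin
      have hne3 : s(x, w) ≠ e₀ := fun hh => hnotin (hh ▸ he₀q)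
      exact hc.1 s(x, w) hewG' e₀ (hqG' e₀ he₀q) hne3
        ⟨x, Sym2.mem_mk_left _ _, hxe₀⟩ (hcw'.trans hce₀.symm)
    · -- maximality at y
      intro w hadj hcw
      have hewG' : s(y, w) ∈ G'.edgeSet := G'.mem_edgeSet.mpr hadj
      have hcw' : c s(y, w) = α := by
        rcases hcw with h | h
        · exact h
        · exact absurd (h ▸ mem_incidentColors_of_mem hewG' (Sym2.mem_mk_left _ _)) hβy
      have hce₁ : c e₁ = α := hforce_y e₁ he₁q hye₁
      rw [hedges]
      by_contra hnotin
      have hne3 : s(y, w) ≠ e₁ := fun hh => hnotin (hh ▸ he₁q)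
      exact hc.1 s(y, w) hewG' e₁ (hqG' e₁ he₁q) hne3
        ⟨y, Sym2.mem_mk_left _ _, hye₁⟩ (hcw'.trans hce₁.symm)
    · rw [hedges]; exact hforce_x
    · rw [hedges]; exact hforce_y
  · -- Backward direction
    rintro ⟨α, hαx, hαy, p, ⟨⟨⟨hpath, hpcol⟩, -, -⟩, -, -⟩⟩ hAc
    have hpG : ∀ e ∈ p.edges, e ∈ G.edgeSet := fun e he =>
      ((hG'edge e).mp (p.edges_subset_edgeSet he)).1
    have hpnot : s(x, y) ∉ p.edges := fun he =>
      ((hG'edge _).mp (p.edges_subset_edgeSet he)).2 rfl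
    set q := (p.transfer G hpG).reverse with hqdef
    have hqedges : q.edges = p.edges.reverse := by
      rw [hqdef, SimpleGraph.Walk.edges_reverse, p.edges_transfer hpG]
    have hqcyc : (SimpleGraph.Walk.cons hxy q).IsCycle := by
      rw [SimpleGraph.Walk.cons_isCycle_iff]
      refine ⟨(hpath.transfer hpG).reverse, ?_⟩
      rw [hqedges, List.mem_reverse]
      exact hpnot
    refine hAc.2 x (SimpleGraph.Walk.cons hxy q) hqcyc ⟨α, β, ?_⟩
    intro e he
    rw [SimpleGraph.Walk.edges_cons, List.mem_cons] at he
    rcases he with rfl | he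
    · exact Or.inr hc'xy
    · rw [hqedges, List.mem_reverse] at he
      rw [hc'eq e (p.edges_subset_edgeSet he)]
      exact hpcol e he
end

section
/- Let G' be a simple graph with an acyclic proper edge coloring c, let u be a vertex, let i, j be neighbors of u, and let N' ∪ N'' be a partition of N(u) \ {i, j}. Suppose (1) c(u,i) does not appear on any edge incident to j other than uj, and c(u,j) does not appear on any edge incident to i other than ui; and (2) for every z ∈ N', the color c(u,z) appears neither on any edge incident to i other than ui nor on any edge incident to j other than uj. Let c' be obtained from c by exchanging the colors of edges ui and uj. Then c' is a proper edge coloring, and c' fails to be acyclic if and only if there exists h ∈ N'' such that, with respect to c', there is an (α,β)-bichromatic cycle passing through h with α ∈ {c'(u,i), c'(u,j)} and β = c'(u,h). -/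
/-- In a cycle starting and ending at `a`, there are two distinct edges at `a`. -/
lemma cycle_two_edges {V : Type*} {G : SimpleGraph V} {a : V}
    (q : G.Walk a a) (hq : q.IsCycle) :
    ∃ x y, x ≠ y ∧ s(a, x) ∈ q.edges ∧ s(a, y) ∈ q.edges := by
  cases q with
  | nil => exact absurd rfl hq.ne_nil
  | @cons _ x _ hax q' =>
    obtain ⟨y, hay, q'', hrev⟩ := SimpleGraph.Walk.exists_eq_cons_of_ne hax.ne q'.reverse
    have hy_edge : s(a, y) ∈ q'.edges := by
      have h1 : s(a, y) ∈ q'.reverse.edges := by rw [hrev]; simp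
      rw [SimpleGraph.Walk.edges_reverse, List.mem_reverse] at h1
      exact h1
    refine ⟨x, y, ?_, by simp, List.mem_cons_of_mem _ hy_edge⟩
    have hsup : q'.support = q''.support.tail.reverse ++ [y, a] := by
      have h2 : q'.reverse.support = a :: q''.support := by rw [hrev]; simp
      have h3 : q'.support.reverse = a :: q''.support := by
        rw [← SimpleGraph.Walk.support_reverse]; exact h2
      have h4 : q'.support = (a :: q''.support).reverse := by
        rw [← h3, List.reverse_reverse]
      rw [h4, List.reverse_cons, q''.support_eq_cons, List.reverse_cons]
      simp
    have hlen : 3 ≤ q'.support.length := by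
      have := hq.three_le_length
      simp only [SimpleGraph.Walk.length_cons] at this
      rw [SimpleGraph.Walk.length_support]
      omega
    have hLne : q''.support.tail.reverse ≠ [] := by
      intro h
      rw [h] at hsup
      rw [hsup] at hlen
      simp at hlen
    obtain ⟨z, t, hzt⟩ := List.exists_cons_of_ne_nil hLne
    have hsup2 : q'.support = z :: (t ++ [y, a]) := by rw [hsup, hzt]; simp
    have hx : q'.support = x :: q'.support.tail := q'.support_eq_cons
    have hxz : x = z := by rw [hx] at hsup2; exact (List.cons.injEq _ _ _ _ ▸ hsup2).1
    have hnd : q'.support.Nodup := by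
      have := hq.support_nodup
      simpa using this
    rw [hsup2, List.nodup_cons] at hnd
    intro hxy
    exact hnd.1 (by rw [hxz] at hxy; rw [← hxy]; simp)

/-- Every vertex of a cycle incident to an edge of the cycle is incident to a second edge. -/
lemma cycle_second_edge {V : Type*} [DecidableEq V] {G : SimpleGraph V} {v a b : V}
    (p : G.Walk v v) (hp : p.IsCycle) (hab : s(a, b) ∈ p.edges) :
    ∃ w, w ≠ b ∧ s(a, w) ∈ p.edges := by
  have ha : a ∈ p.support := p.fst_mem_support_of_mem_edges hab
  have hperm : List.Perm (p.rotate a ha).edges p.edges := (p.rotate_edges a ha).perm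
  obtain ⟨x, y, hxy, hx, hy⟩ := cycle_two_edges (p.rotate a ha) ((SimpleGraph.Walk.isCycle_rotate ha).mpr hp)
  by_cases hxb : x = b
  · exact ⟨y, fun h => hxy (hxb.trans h.symm), hperm.subset hy⟩
  · exact ⟨x, hxb, hperm.subset hx⟩

/-- **Fact 3 (Configuration A).**  Let `i, j` be neighbors of `u` and let
`N' ∪ N''` partition `N(u) \ {i, j}`.  Assume (1) `c(u,i)` appears on no edge
incident to `j` other than `uj` and `c(u,j)` appears on no edge incident to `i`
other than `ui`; and (2) for every `z ∈ N'`, the color `c(u,z)` appears on no edge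
incident to `i` other than `ui` and on no edge incident to `j` other than `uj`.
Then the coloring `c'` obtained by exchanging the colors of `ui` and `uj` is proper,
and `c'` fails to be acyclic iff there is `h ∈ N''` and a bichromatic cycle through
`h` in the colors `α ∈ {c'(u,i), c'(u,j)}` and `β = c'(u,h)` with respect to `c'`. -/
theorem color_exchange_not_valid_iff {V : Type*} [DecidableEq V]
    (G' : SimpleGraph V) (c : Sym2 V → ℕ)
    (hc : AcyclicProperEdgeColoring G' c)
    (u i j : V) (hui : G'.Adj u i) (huj : G'.Adj u j)
    (N' N'' : Set V)
    (hpart : N' ∪ N'' = G'.neighborSet u \ {i, j})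
    (hNdisj : Disjoint N' N'')
    (h1i : ∀ w : V, G'.Adj j w → w ≠ u → c s(j, w) ≠ c s(u, i))
    (h1j : ∀ w : V, G'.Adj i w → w ≠ u → c s(i, w) ≠ c s(u, j))
    (h2 : ∀ z ∈ N', (∀ w : V, G'.Adj i w → w ≠ u → c s(i, w) ≠ c s(u, z)) ∧
                    (∀ w : V, G'.Adj j w → w ≠ u → c s(j, w) ≠ c s(u, z)))
    (c' : Sym2 V → ℕ)
    (hc' : c' = fun e =>
      if e = s(u, i) then c s(u, j) else if e = s(u, j) then c s(u, i) else c e) :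
    ProperEdgeColoring G' c' ∧
    (¬ AcyclicProperEdgeColoring G' c' ↔
      ∃ h ∈ N'', ∃ (v : V) (q : G'.Walk v v), q.IsCycle ∧ h ∈ q.support ∧
        ∃ α : ℕ, (α = c' s(u, i) ∨ α = c' s(u, j)) ∧
          ∀ e ∈ q.edges, c' e = α ∨ c' e = c' s(u, h)) := by
  have hprop := hc.1
  have hacyc := hc.2
  -- basic computations for c'
  have hc'ui : c' s(u, i) = c s(u, j) := by rw [hc']; simp
  have hc'uj : c' s(u, j) = c s(u, i) := by
    by_cases h : s(u, j) = s(u, i)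
    · rw [h, hc'ui, h]
    · rw [hc']; simp [h]
  have hc'other : ∀ e, e ≠ s(u, i) → e ≠ s(u, j) → c' e = c e := by
    intro e h1 h2; rw [hc']; simp [h1, h2]
  have hiu : i ≠ u := hui.ne'
  have hju : j ≠ u := huj.ne'
  -- membership facts
  have huiE : s(u, i) ∈ G'.edgeSet := hui
  have hujE : s(u, j) ∈ G'.edgeSet := huj
  have keyA : ∀ e ∈ G'.edgeSet, e ≠ s(u, i) → e ≠ s(u, j) →
      (∃ v : V, v ∈ e ∧ v ∈ s(u, i)) → c e ≠ c s(u, j) := by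
    rintro e he hne1 hne2 ⟨v, hv1, hv2⟩
    rw [Sym2.mem_iff] at hv2
    rcases hv2 with h | h
    · have hv1' : u ∈ e := h ▸ hv1
      exact hprop e he s(u, j) hujE hne2 ⟨u, hv1', Sym2.mem_mk_left u j⟩
    · have hv1' : i ∈ e := h ▸ hv1
      obtain ⟨w, rfl⟩ := Sym2.mem_iff_exists.mp hv1'
      have hAdj : G'.Adj i w := G'.mem_edgeSet.mp he
      have hwu : w ≠ u := by
        rintro rfl
        exact hne1 Sym2.eq_swap
      exact h1j w hAdj hwu
  have keyB : ∀ e ∈ G'.edgeSet, e ≠ s(u, i) → e ≠ s(u, j) →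
      (∃ v : V, v ∈ e ∧ v ∈ s(u, j)) → c e ≠ c s(u, i) := by
    rintro e he hne1 hne2 ⟨v, hv1, hv2⟩
    rw [Sym2.mem_iff] at hv2
    rcases hv2 with h | h
    · have hv1' : u ∈ e := h ▸ hv1
      exact hprop e he s(u, i) huiE hne1 ⟨u, hv1', Sym2.mem_mk_left u i⟩
    · have hv1' : j ∈ e := h ▸ hv1
      obtain ⟨w, rfl⟩ := Sym2.mem_iff_exists.mp hv1'
      have hAdj : G'.Adj j w := G'.mem_edgeSet.mp he
      have hwu : w ≠ u := by
        rintro rfl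
        exact hne2 Sym2.eq_swap
      exact h1i w hAdj hwu
  -- properness of c'
  have hP : ProperEdgeColoring G' c' := by
    intro e₁ he₁ e₂ he₂ hne hshare
    by_cases h₁i : e₁ = s(u, i)
    · subst h₁i
      rw [hc'ui]
      by_cases h₂j : e₂ = s(u, j)
      · subst h₂j
        rw [hc'uj]
        exact (hprop _ huiE _ hujE hne ⟨u, Sym2.mem_mk_left _ _, Sym2.mem_mk_left _ _⟩).symm
      · have h₂i : e₂ ≠ s(u, i) := fun h => hne h.symm
        rw [hc'other e₂ h₂i h₂j]
        obtain ⟨v, hv1, hv2⟩ := hshare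
        exact (keyA e₂ he₂ h₂i h₂j ⟨v, hv2, hv1⟩).symm
    · by_cases h₁j : e₁ = s(u, j)
      · subst h₁j
        rw [hc'uj]
        by_cases h₂i : e₂ = s(u, i)
        · subst h₂i
          rw [hc'ui]
          exact hprop _ huiE _ hujE (fun h => hne h.symm) ⟨u, Sym2.mem_mk_left _ _, Sym2.mem_mk_left _ _⟩
        · have h₂j : e₂ ≠ s(u, j) := fun h => hne h.symm
          rw [hc'other e₂ h₂i h₂j]
          obtain ⟨v, hv1, hv2⟩ := hshare
          exact (keyB e₂ he₂ h₂i h₂j ⟨v, hv2, hv1⟩).symm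
      · rw [hc'other e₁ h₁i h₁j]
        by_cases h₂i : e₂ = s(u, i)
        · subst h₂i
          rw [hc'ui]
          exact keyA e₁ he₁ h₁i h₁j hshare
        · by_cases h₂j : e₂ = s(u, j)
          · subst h₂j
            rw [hc'uj]
            exact keyB e₁ he₁ h₁i h₁j hshare
          · rw [hc'other e₂ h₂i h₂j]
            exact hprop e₁ he₁ e₂ he₂ hne hshare
  refine ⟨hP, ?_, ?_⟩
  · -- forward direction
    intro hnot
    have hex : ∃ v, ∃ (p : G'.Walk v v), p.IsCycle ∧
        ∃ α β : ℕ, ∀ e ∈ p.edges, c' e = α ∨ c' e = β := by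
      by_contra hcon
      push_neg at hcon
      refine hnot ⟨hP, fun v p hcyc hb => ?_⟩
      obtain ⟨α, β, hb⟩ := hb
      obtain ⟨e', he', hne⟩ := hcon v p hcyc α β
      rcases hb e' he' with h | h
      · exact hne.1 h
      · exact hne.2 h
    obtain ⟨v, p, hcyc, α, β, hcol⟩ := hex
    by_cases hin_i : s(u, i) ∈ p.edges
    · by_cases hin_j : s(u, j) ∈ p.edges
      · -- both swapped edges in the cycle : contradiction with acyclicity of c
        exfalso
        refine hacyc v p hcyc ⟨α, β, fun e he => ?_⟩
        by_cases h1 : e = s(u, i)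
        · subst h1
          have := hcol _ hin_j
          rwa [hc'uj] at this
        · by_cases h2' : e = s(u, j)
          · subst h2'
            have := hcol _ hin_i
            rwa [hc'ui] at this
          · have := hcol e he
            rwa [hc'other e h1 h2'] at this
      · -- only s(u,i) in the cycle
        have hij : i ≠ j := by rintro rfl; exact hin_j hin_i
        obtain ⟨z, hzi, hz_edge⟩ := cycle_second_edge p hcyc hin_i
        have hzj : z ≠ j := by rintro rfl; exact hin_j hz_edge
        have hAdj_uz : G'.Adj u z := p.edges_subset_edgeSet hz_edge
        have hzN : z ∈ N' ∪ N'' := by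
          rw [hpart]
          exact ⟨hAdj_uz, by simp [hzi, hzj]⟩
        have hin_i' : s(i, u) ∈ p.edges := by rwa [Sym2.eq_swap]
        obtain ⟨w, hwu, hw_edge⟩ := cycle_second_edge p hcyc hin_i'
        have hAdj_iw : G'.Adj i w := p.edges_subset_edgeSet hw_edge
        have hcz : c' s(u, z) = c s(u, z) := by
          refine hc'other _ (fun h => hzi ?_) (fun h => hzj ?_)
          · simpa using (Sym2.congr_right.mp h)
          · simpa using (Sym2.congr_right.mp h)
        have hcw : c' s(i, w) = c s(i, w) := by
          refine hc'other _ (fun h => ?_) (fun h => ?_)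
          · rw [Sym2.eq_swap (a := u) (b := i)] at h
            exact hwu (Sym2.congr_right.mp h)
          · rw [Sym2.eq_iff] at h
            rcases h with ⟨h1, _⟩ | ⟨h1, _⟩
            · exact hiu h1
            · exact hij h1
        have hAB : c s(u, j) ≠ c s(u, z) := by
          refine hprop _ hujE _ hAdj_uz (fun h => hzj (Sym2.congr_right.mp h).symm)
            ⟨u, Sym2.mem_mk_left _ _, Sym2.mem_mk_left _ _⟩
        have hAαβ : c s(u, j) = α ∨ c s(u, j) = β := by
          have := hcol _ hin_i
          rwa [hc'ui] at this
        have hBαβ : c s(u, z) = α ∨ c s(u, z) = β := by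
          have := hcol _ hz_edge
          rwa [hcz] at this
        have hall : ∀ e ∈ p.edges, c' e = c s(u, j) ∨ c' e = c s(u, z) := by
          intro e he
          have := hcol e he
          omega
        have hzN'' : z ∈ N'' := by
          rcases hzN with hz' | hz''
          · exfalso
            have hcl := hall _ hw_edge
            rw [hcw] at hcl
            rcases hcl with hcl | hcl
            · exact h1j w hAdj_iw hwu hcl
            · exact (h2 z hz').1 w hAdj_iw hwu hcl
          · exact hz''
        refine ⟨z, hzN'', v, p, hcyc, p.snd_mem_support_of_mem_edges hz_edge,
          c' s(u, i), Or.inl rfl, ?_⟩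
        intro e he
        rw [hc'ui, hcz]
        exact hall e he
    · by_cases hin_j : s(u, j) ∈ p.edges
      · -- only s(u,j) in the cycle
        have hij : i ≠ j := by rintro rfl; exact hin_i hin_j
        obtain ⟨z, hzj, hz_edge⟩ := cycle_second_edge p hcyc hin_j
        have hzi : z ≠ i := by rintro rfl; exact hin_i hz_edge
        have hAdj_uz : G'.Adj u z := p.edges_subset_edgeSet hz_edge
        have hzN : z ∈ N' ∪ N'' := by
          rw [hpart]
          exact ⟨hAdj_uz, by simp [hzi, hzj]⟩
        have hin_j' : s(j, u) ∈ p.edges := by rwa [Sym2.eq_swap]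
        obtain ⟨w, hwu, hw_edge⟩ := cycle_second_edge p hcyc hin_j'
        have hAdj_jw : G'.Adj j w := p.edges_subset_edgeSet hw_edge
        have hcz : c' s(u, z) = c s(u, z) := by
          refine hc'other _ (fun h => hzi ?_) (fun h => hzj ?_)
          · simpa using (Sym2.congr_right.mp h)
          · simpa using (Sym2.congr_right.mp h)
        have hcw : c' s(j, w) = c s(j, w) := by
          refine hc'other _ (fun h => ?_) (fun h => ?_)
          · rw [Sym2.eq_iff] at h
            rcases h with ⟨h1, _⟩ | ⟨h1, _⟩
            · exact hju h1
            · exact hij h1.symm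
          · rw [Sym2.eq_swap (a := u) (b := j)] at h
            exact hwu (Sym2.congr_right.mp h)
        have hAB : c s(u, i) ≠ c s(u, z) := by
          refine hprop _ huiE _ hAdj_uz (fun h => hzi (Sym2.congr_right.mp h).symm)
            ⟨u, Sym2.mem_mk_left _ _, Sym2.mem_mk_left _ _⟩
        have hAαβ : c s(u, i) = α ∨ c s(u, i) = β := by
          have := hcol _ hin_j
          rwa [hc'uj] at this
        have hBαβ : c s(u, z) = α ∨ c s(u, z) = β := by
          have := hcol _ hz_edge
          rwa [hcz] at this
        have hall : ∀ e ∈ p.edges, c' e = c s(u, i) ∨ c' e = c s(u, z) := by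
          intro e he
          have := hcol e he
          omega
        have hzN'' : z ∈ N'' := by
          rcases hzN with hz' | hz''
          · exfalso
            have hcl := hall _ hw_edge
            rw [hcw] at hcl
            rcases hcl with hcl | hcl
            · exact h1i w hAdj_jw hwu hcl
            · exact (h2 z hz').2 w hAdj_jw hwu hcl
          · exact hz''
        refine ⟨z, hzN'', v, p, hcyc, p.snd_mem_support_of_mem_edges hz_edge,
          c' s(u, j), Or.inr rfl, ?_⟩
        intro e he
        rw [hc'uj, hcz]
        exact hall e he
      · -- neither : contradiction with acyclicity of c
        exfalso
        refine hacyc v p hcyc ⟨α, β, fun e he => ?_⟩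
        have h1 : e ≠ s(u, i) := fun h => hin_i (h ▸ he)
        have h2' : e ≠ s(u, j) := fun h => hin_j (h ▸ he)
        have := hcol e he
        rwa [hc'other e h1 h2'] at this
  · -- backward direction
    rintro ⟨h, _, v, q, hq, _, α, _, hall⟩ hA
    exact hA.2 v q hq ⟨α, c' s(u, h), hall⟩
end

section
/- Let G' be a simple graph with an acyclic proper edge coloring c, let u be a vertex, and let i, j be neighbors of u. Suppose (1) c(u,i) does not appear on any edge incident to j other than uj, and c(u,j) does not appear on any edge incident to i other than ui; and (2) for every neighbor z of u with z ∉ {i, j}, the color c(u,z) appears neither on any edge incident to i other than ui nor on any edge incident to j other than uj. Then the coloring c' obtained from c by exchanging the colors of edges ui and uj is an acyclic proper edge coloring of G'. -/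
open SimpleGraph Walk

private lemma edge_form {V : Type*} {G : SimpleGraph V} {e : Sym2 V} {u : V}
    (he : e ∈ G.edgeSet) (hu : u ∈ e) : ∃ z, G.Adj u z ∧ e = s(u, z) := by
  induction e with
  | _ a b =>
    rw [Sym2.mem_iff] at hu
    rcases hu with rfl | rfl
    · exact ⟨b, he, rfl⟩
    · exact ⟨a, (G.mem_edgeSet.mp he).symm, Sym2.eq_swap.symm⟩

private lemma head_ne_getLast' {α : Type*} {l : List α} {a b : α}
    (hn : l.Nodup) (hl : 2 ≤ l.length) (ha : l.head? = some a) (hb : l.getLast? = some b) :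
    a ≠ b := by
  match l with
  | [] => simp at ha
  | [x] => simp at hl
  | x :: y :: t =>
    simp only [List.head?_cons, Option.some.injEq] at ha
    subst ha
    rw [List.getLast?_cons_cons] at hb
    have hbm : b ∈ y :: t := by
      have := List.mem_getLast?_eq_getLast (l := y :: t) hb
      obtain ⟨h', rfl⟩ := this
      exact List.getLast_mem h'
    rintro rfl
    exact (List.nodup_cons.mp hn).1 hbm

private lemma two_edges_at_aux {V : Type*} {G : SimpleGraph V} {u : V}
    (q : G.Walk u u) (hq : q.IsCycle) :
    ∃ e₁ e₂, e₁ ∈ q.edges ∧ e₂ ∈ q.edges ∧ e₁ ≠ e₂ ∧ u ∈ e₁ ∧ u ∈ e₂ := by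
  have hlen : 3 ≤ q.length := hq.three_le_length
  cases q with
  | nil => simp at hlen
  | cons h₁ q₁ =>
    rename_i x
    have hrnil : ¬ (Walk.cons h₁ q₁).reverse.Nil := by
      rw [Walk.not_nil_iff_lt_length, Walk.length_reverse]
      omega
    obtain ⟨y, hadj, q₂, hr⟩ := Walk.not_nil_iff.mp hrnil
    refine ⟨s(u, x), s(u, y), by simp, ?_, ?_, Sym2.mem_mk_left u x, Sym2.mem_mk_left u y⟩
    · have : s(u, y) ∈ (Walk.cons h₁ q₁).reverse.edges := by rw [hr]; simp
      rwa [Walk.edges_reverse, List.mem_reverse] at this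
    · apply head_ne_getLast' hq.edges_nodup
      · rw [Walk.length_edges]; omega
      · simp
      · have h1 : (Walk.cons h₁ q₁).edges.reverse = s(u, y) :: q₂.edges := by
          rw [← Walk.edges_reverse, hr]; simp
        have := congrArg List.head? h1
        rwa [List.head?_reverse] at this

private lemma two_edges_at {V : Type*} [DecidableEq V] {G : SimpleGraph V} {v u : V}
    (p : G.Walk v v) (hp : p.IsCycle) (hu : u ∈ p.support) :
    ∃ e₁ e₂, e₁ ∈ p.edges ∧ e₂ ∈ p.edges ∧ e₁ ≠ e₂ ∧ u ∈ e₁ ∧ u ∈ e₂ := by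
  have hperm : (p.rotate u hu).edges ~r p.edges := p.rotate_edges u hu
  obtain ⟨e₁, e₂, h1, h2, h3, h4, h5⟩ := two_edges_at_aux (p.rotate u hu) (hp.rotate hu)
  exact ⟨e₁, e₂, hperm.mem_iff.mp h1, hperm.mem_iff.mp h2, h3, h4, h5⟩
/-- **Fact 4.**  Let `i, j` be neighbors of `u`.  Assume (1) `c(u,i)` appears on
no edge incident to `j` other than `uj` and `c(u,j)` appears on no edge incident
to `i` other than `ui`; and (2) for every neighbor `z` of `u` with `z ∉ {i, j}`,
the color `c(u,z)` appears on no edge incident to `i` other than `ui` and on no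
edge incident to `j` other than `uj`.  Then the coloring `c'` obtained by
exchanging the colors of `ui` and `uj` is an acyclic proper edge coloring. -/
theorem color_exchange_valid {V : Type*} [DecidableEq V]
    (G' : SimpleGraph V) (c : Sym2 V → ℕ)
    (hc : AcyclicProperEdgeColoring G' c)
    (u i j : V) (hui : G'.Adj u i) (huj : G'.Adj u j)
    (h1i : ∀ w : V, G'.Adj j w → w ≠ u → c s(j, w) ≠ c s(u, i))
    (h1j : ∀ w : V, G'.Adj i w → w ≠ u → c s(i, w) ≠ c s(u, j))
    (h2 : ∀ z : V, G'.Adj u z → z ≠ i → z ≠ j →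
      (∀ w : V, G'.Adj i w → w ≠ u → c s(i, w) ≠ c s(u, z)) ∧
      (∀ w : V, G'.Adj j w → w ≠ u → c s(j, w) ≠ c s(u, z))) :
    AcyclicProperEdgeColoring G'
      (fun e => if e = s(u, i) then c s(u, j)
                else if e = s(u, j) then c s(u, i) else c e) := by
  have hmi : s(u, i) ∈ G'.edgeSet := G'.mem_edgeSet.mpr hui
  have hmj : s(u, j) ∈ G'.edgeSet := G'.mem_edgeSet.mpr huj
  -- e shares a vertex with s(u,i), is neither s(u,i) nor s(u,j): its color differs from c s(u,j)
  have auxI : ∀ e ∈ G'.edgeSet, e ≠ s(u, i) → e ≠ s(u, j) → (u ∈ e ∨ i ∈ e) →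
      c e ≠ c s(u, j) := by
    intro e he hni hnj hmem
    rcases hmem with hue | hie
    · obtain ⟨z, hz, rfl⟩ := edge_form he hue
      exact hc.1 _ he _ hmj hnj ⟨u, Sym2.mem_mk_left u z, Sym2.mem_mk_left u j⟩
    · obtain ⟨w, hw, rfl⟩ := edge_form he hie
      have hwu : w ≠ u := by rintro rfl; exact hni Sym2.eq_swap
      exact h1j w hw hwu
  have auxJ : ∀ e ∈ G'.edgeSet, e ≠ s(u, i) → e ≠ s(u, j) → (u ∈ e ∨ j ∈ e) →
      c e ≠ c s(u, i) := by
    intro e he hni hnj hmem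
    rcases hmem with hue | hje
    · obtain ⟨z, hz, rfl⟩ := edge_form he hue
      exact hc.1 _ he _ hmi hni ⟨u, Sym2.mem_mk_left u z, Sym2.mem_mk_left u i⟩
    · obtain ⟨w, hw, rfl⟩ := edge_form he hje
      have hwu : w ≠ u := by rintro rfl; exact hnj Sym2.eq_swap
      exact h1i w hw hwu
  constructor
  · -- properness
    intro e₁ he₁ e₂ he₂ hne hshare
    obtain ⟨v₀, hv₁, hv₂⟩ := hshare
    beta_reduce
    by_cases a1 : e₁ = s(u, i)
    · rw [if_pos a1]
      by_cases a2 : e₂ = s(u, i)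
      · exact absurd (a1.trans a2.symm) hne
      · rw [if_neg a2]
        by_cases b2 : e₂ = s(u, j)
        · rw [if_pos b2]
          exact hc.1 _ hmj _ hmi (fun h => a2 (b2.trans h)) ⟨u, Sym2.mem_mk_left u j, Sym2.mem_mk_left u i⟩
        · rw [if_neg b2]
          refine (auxI e₂ he₂ a2 b2 ?_).symm
          rw [a1, Sym2.mem_iff] at hv₁
          rcases hv₁ with rfl | rfl
          · exact Or.inl hv₂
          · exact Or.inr hv₂
    · rw [if_neg a1]
      by_cases b1 : e₁ = s(u, j)
      · rw [if_pos b1]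
        by_cases a2 : e₂ = s(u, i)
        · rw [if_pos a2]
          exact hc.1 _ hmi _ hmj (fun h => a1 (b1.trans h.symm)) ⟨u, Sym2.mem_mk_left u i, Sym2.mem_mk_left u j⟩
        · rw [if_neg a2]
          by_cases b2 : e₂ = s(u, j)
          · exact absurd (b1.trans b2.symm) hne
          · rw [if_neg b2]
            refine (auxJ e₂ he₂ a2 b2 ?_).symm
            rw [b1, Sym2.mem_iff] at hv₁
            rcases hv₁ with rfl | rfl
            · exact Or.inl hv₂
            · exact Or.inr hv₂
      · rw [if_neg b1]
        by_cases a2 : e₂ = s(u, i)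
        · rw [if_pos a2]
          refine auxI e₁ he₁ a1 b1 ?_
          rw [a2, Sym2.mem_iff] at hv₂
          rcases hv₂ with rfl | rfl
          · exact Or.inl hv₁
          · exact Or.inr hv₁
        · rw [if_neg a2]
          by_cases b2 : e₂ = s(u, j)
          · rw [if_pos b2]
            refine auxJ e₁ he₁ a1 b1 ?_
            rw [b2, Sym2.mem_iff] at hv₂
            rcases hv₂ with rfl | rfl
            · exact Or.inl hv₁
            · exact Or.inr hv₁
          · rw [if_neg b2]
            exact hc.1 e₁ he₁ e₂ he₂ hne ⟨v₀, hv₁, hv₂⟩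
  · -- acyclicity
    rintro v p hp ⟨α, β, hall⟩
    by_cases hij : s(u, i) = s(u, j)
    · -- then c' = c
      refine hc.2 v p hp ⟨α, β, fun e he => ?_⟩
      have := hall e he
      beta_reduce at this
      split_ifs at this with h1 h2
      · rwa [h1, hij]
      · rwa [h2, ← hij]
      · exact this
    · by_cases hpi : s(u, i) ∈ p.edges
      · by_cases hpj : s(u, j) ∈ p.edges
        · -- both: the c-colors on p are still in {α, β}
          refine hc.2 v p hp ⟨α, β, fun e he => ?_⟩
          by_cases h1 : e = s(u, i)
          · have := hall s(u, j) hpj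
            beta_reduce at this
            rw [if_neg (Ne.symm hij), if_pos rfl] at this
            rwa [h1]
          · by_cases h2 : e = s(u, j)
            · have := hall s(u, i) hpi
              beta_reduce at this
              rw [if_pos rfl] at this
              rwa [h2]
            · have := hall e he
              beta_reduce at this
              rwa [if_neg h1, if_neg h2] at this
        · -- only s(u,i) on the cycle
          have hu_sup : u ∈ p.support := p.fst_mem_support_of_mem_edges hpi
          have hi_sup : i ∈ p.support := p.snd_mem_support_of_mem_edges hpi
          obtain ⟨e₁, e₂, he₁, he₂, hne12, hu1, hu2⟩ := two_edges_at p hp hu_sup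
          have hz : ∃ e ∈ p.edges, u ∈ e ∧ e ≠ s(u, i) := by
            rcases eq_or_ne e₁ s(u, i) with h | h
            · exact ⟨e₂, he₂, hu2, fun h' => hne12 (h.trans h'.symm)⟩
            · exact ⟨e₁, he₁, hu1, h⟩
          obtain ⟨e, heE, hue, hnei⟩ := hz
          obtain ⟨z, hz, rfl⟩ := edge_form (p.edges_subset_edgeSet heE) hue
          have hzi : z ≠ i := fun h => hnei (by rw [h])
          have hzj : z ≠ j := fun h => hpj (by rw [← h]; exact heE)
          obtain ⟨f₁, f₂, hf₁, hf₂, hnef, hif₁, hif₂⟩ := two_edges_at p hp hi_sup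
          have hw : ∃ f ∈ p.edges, i ∈ f ∧ f ≠ s(u, i) := by
            rcases eq_or_ne f₁ s(u, i) with h | h
            · exact ⟨f₂, hf₂, hif₂, fun h' => hnef (h.trans h'.symm)⟩
            · exact ⟨f₁, hf₁, hif₁, h⟩
          obtain ⟨f, hfE, hif, hnfi⟩ := hw
          obtain ⟨w, hw, rfl⟩ := edge_form (p.edges_subset_edgeSet hfE) hif
          have hwu : w ≠ u := by rintro rfl; exact hnfi Sym2.eq_swap
          -- colors
          have hcz : c s(u, z) = α ∨ c s(u, z) = β := by
            have := hall s(u, z) heE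
            beta_reduce at this
            rwa [if_neg hnei, if_neg (fun h : s(u,z) = s(u,j) => hpj (h ▸ heE))] at this
          have hcw : c s(i, w) = α ∨ c s(i, w) = β := by
            have := hall s(i, w) hfE
            beta_reduce at this
            rwa [if_neg hnfi, if_neg (fun h : s(i,w) = s(u,j) => hpj (h ▸ hfE))] at this
          have hcj : c s(u, j) = α ∨ c s(u, j) = β := by
            have := hall s(u, i) hpi
            beta_reduce at this
            rwa [if_pos rfl] at this
          have hne1 : c s(u, z) ≠ c s(u, j) :=
            hc.1 _ (p.edges_subset_edgeSet heE) _ hmj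
              (fun h => hzj (Sym2.congr_right.mp h))
              ⟨u, Sym2.mem_mk_left u z, Sym2.mem_mk_left u j⟩
          have hne2 : c s(i, w) ≠ c s(u, j) := h1j w hw hwu
          have heq : c s(i, w) = c s(u, z) := by
            rcases hcj with h | h <;> rcases hcz with h1 | h1 <;> rcases hcw with h2 | h2 <;> omega
          exact (h2 z hz hzi hzj).1 w hw hwu heq
      · by_cases hpj : s(u, j) ∈ p.edges
        · -- only s(u,j) on the cycle
          have hu_sup : u ∈ p.support := p.fst_mem_support_of_mem_edges hpj
          have hj_sup : j ∈ p.support := p.snd_mem_support_of_mem_edges hpj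
          obtain ⟨e₁, e₂, he₁, he₂, hne12, hu1, hu2⟩ := two_edges_at p hp hu_sup
          have hz : ∃ e ∈ p.edges, u ∈ e ∧ e ≠ s(u, j) := by
            rcases eq_or_ne e₁ s(u, j) with h | h
            · exact ⟨e₂, he₂, hu2, fun h' => hne12 (h.trans h'.symm)⟩
            · exact ⟨e₁, he₁, hu1, h⟩
          obtain ⟨e, heE, hue, hnej⟩ := hz
          obtain ⟨z, hz, rfl⟩ := edge_form (p.edges_subset_edgeSet heE) hue
          have hzj : z ≠ j := fun h => hnej (by rw [h])
          have hzi : z ≠ i := fun h => hpi (by rw [← h]; exact heE)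
          obtain ⟨f₁, f₂, hf₁, hf₂, hnef, hjf₁, hjf₂⟩ := two_edges_at p hp hj_sup
          have hw : ∃ f ∈ p.edges, j ∈ f ∧ f ≠ s(u, j) := by
            rcases eq_or_ne f₁ s(u, j) with h | h
            · exact ⟨f₂, hf₂, hjf₂, fun h' => hnef (h.trans h'.symm)⟩
            · exact ⟨f₁, hf₁, hjf₁, h⟩
          obtain ⟨f, hfE, hjf, hnfj⟩ := hw
          obtain ⟨w, hw, rfl⟩ := edge_form (p.edges_subset_edgeSet hfE) hjf
          have hwu : w ≠ u := by rintro rfl; exact hnfj Sym2.eq_swap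
          have hcz : c s(u, z) = α ∨ c s(u, z) = β := by
            have := hall s(u, z) heE
            beta_reduce at this
            rwa [if_neg (fun h : s(u,z) = s(u,i) => hpi (h ▸ heE)), if_neg hnej] at this
          have hcw : c s(j, w) = α ∨ c s(j, w) = β := by
            have := hall s(j, w) hfE
            beta_reduce at this
            rwa [if_neg (fun h : s(j,w) = s(u,i) => hpi (h ▸ hfE)), if_neg hnfj] at this
          have hci : c s(u, i) = α ∨ c s(u, i) = β := by
            have := hall s(u, j) hpj
            beta_reduce at this
            rwa [if_neg (Ne.symm hij), if_pos rfl] at this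
          have hne1 : c s(u, z) ≠ c s(u, i) :=
            hc.1 _ (p.edges_subset_edgeSet heE) _ hmi
              (fun h => hzi (Sym2.congr_right.mp h))
              ⟨u, Sym2.mem_mk_left u z, Sym2.mem_mk_left u i⟩
          have hne2 : c s(j, w) ≠ c s(u, i) := h1i w hw hwu
          have heq : c s(j, w) = c s(u, z) := by
            rcases hci with h | h <;> rcases hcz with h1 | h1 <;> rcases hcw with h2 | h2 <;> omega
          exact (h2 z hz hzi hzj).2 w hw hwu heq
        · -- neither on the cycle
          refine hc.2 v p hp ⟨α, β, fun e he => ?_⟩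
          have := hall e he
          beta_reduce at this
          rwa [if_neg (fun h : e = s(u,i) => hpi (h ▸ he)), if_neg (fun h : e = s(u,j) => hpj (h ▸ he))] at this
end
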